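/- Let ε > 0, let f(t) = A(t)e^{iφ(t)} be a function of intrinsic-mode type with accuracy ε, and let N be a positive integer. Then the modulated signal g(t) = e^{iNt} f(t) satisfies ‖P₋g‖²_{L²(0,2π)} ≤ (8π²/‖A‖²_{L²(0,2π)}) · (‖A′‖²_{L^∞} + ε²‖A‖²_{L^∞}) / (inf_{0<t<2π} φ′(t) + N) · ‖f‖²_{L²(0,2π)}; in particular the bound on the anti-holomorphic part tends to 0 as N → ∞. -/

import Mathlib

open Real MeasureTheory

/-- The `n`-th Fourier coefficient of a `2π`-periodic function,
`f̂(n) = (1/2π) ∫₀^{2π} f(t) e^{-int} dt`. -/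
noncomputable def fourierCoef (f : ℝ → ℂ) (n : ℤ) : ℂ :=
  (1 / (2 * (Real.pi : ℂ))) * ∫ t in (0:ℝ)..(2 * Real.pi), f t * Complex.exp (-(Complex.I * n * t))

set_option maxHeartbeats 1000000 in
/-- Adding a carrier frequency `e^{iNt}` to an intrinsic-mode type function `f = A e^{iφ}`
makes the anti-holomorphic part small: `‖P₋(e^{iNt} f)‖²_{L²}` (computed via Plancherel as
`2π Σ_{n<0} |ĝ(n)|²` for `g = e^{iNt} f`) is bounded by the stated quantity, and in
particular the bound tends to `0` as `N → ∞`. -/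
theorem carrier_frequency (ε : ℝ) (hε : 0 < ε) (A φ : ℝ → ℝ) (f : ℝ → ℂ)
    (hA : ContDiff ℝ 1 A) (hAper : Function.Periodic A (2 * π)) (hApos : ∀ t, 0 < A t)
    (hφ : ContDiff ℝ 2 φ) (m : ℤ) (hφper : ∀ t, φ (t + 2 * π) = φ t + 2 * π * m)
    (hinf : 0 < ⨅ t : ℝ, deriv φ t) (hsup : BddAbove (Set.range (deriv φ)))
    (hA' : ∀ t, |deriv A t| ≤ ε * deriv φ t)
    (hφ'' : ∀ t, |deriv (deriv φ) t| ≤ ε * deriv φ t)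
    (hf : ∀ t, f t = (A t : ℂ) * Complex.exp (Complex.I * φ t)) :
    (∀ N : ℕ, 0 < N →
      2 * π * ∑' k : ℕ,
          ‖fourierCoef (fun t => Complex.exp (Complex.I * N * t) * f t) (-((k : ℤ) + 1))‖ ^ 2 ≤
        8 * π ^ 2 / (∫ t in (0:ℝ)..(2 * π), A t ^ 2) *
          ((⨆ t : ℝ, |deriv A t|) ^ 2 + ε ^ 2 * (⨆ t : ℝ, |A t|) ^ 2) /
            (sInf (deriv φ '' Set.Ioo 0 (2 * π)) + N) *
          ∫ t in (0:ℝ)..(2 * π), ‖f t‖ ^ 2) ∧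
    Filter.Tendsto
      (fun N : ℕ =>
        8 * π ^ 2 / (∫ t in (0:ℝ)..(2 * π), A t ^ 2) *
          ((⨆ t : ℝ, |deriv A t|) ^ 2 + ε ^ 2 * (⨆ t : ℝ, |A t|) ^ 2) /
            (sInf (deriv φ '' Set.Ioo 0 (2 * π)) + N) *
          ∫ t in (0:ℝ)..(2 * π), ‖f t‖ ^ 2)
      Filter.atTop (nhds 0) := by
  have pi_pos := Real.pi_pos
  have h2pi : (0:ℝ) < 2 * π := by positivity
  set a := ⨆ t : ℝ, |deriv A t| with ha_def
  set b := ⨆ t : ℝ, |A t| with hb_def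
  set c := sInf (deriv φ '' Set.Ioo 0 (2 * π)) with hc_def
  -- differentiability facts
  have hA1 : Differentiable ℝ A := hA.differentiable one_ne_zero
  have contA : Continuous A := hA.continuous
  have contA' : Continuous (deriv A) := hA.continuous_deriv le_rfl
  have hφ1 : Differentiable ℝ φ := hφ.differentiable two_ne_zero
  have hφd : ContDiff ℝ 1 (deriv φ) := by
    have h2 : ContDiff ℝ ((1 : ℕ) + 1) φ := by exact_mod_cast hφ
    exact (contDiff_succ_iff_deriv.mp h2).2.2
  have hφ'1 : Differentiable ℝ (deriv φ) := hφd.differentiable one_ne_zero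
  have contφ' : Continuous (deriv φ) := hφ'1.continuous
  have contφ'' : Continuous (deriv (deriv φ)) := hφd.continuous_deriv le_rfl
  have contφ : Continuous φ := hφ.continuous
  have hdA : ∀ t, HasDerivAt A (deriv A t) t := fun t => (hA1 t).hasDerivAt
  have hdφ : ∀ t, HasDerivAt φ (deriv φ t) t := fun t => (hφ1 t).hasDerivAt
  have hdφ' : ∀ t, HasDerivAt (deriv φ) (deriv (deriv φ) t) t := fun t => (hφ'1 t).hasDerivAt
  -- periodicity of derivatives
  have hφ'per : Function.Periodic (deriv φ) (2 * π) := by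
    intro t
    have h1 : HasDerivAt (fun s => φ (s + 2 * π)) (deriv φ (t + 2 * π)) t :=
      (hdφ (t + 2 * π)).comp_add_const
    have h2 : (fun s => φ (s + 2 * π)) = fun s => φ s + 2 * π * m := funext hφper
    rw [h2] at h1
    exact h1.unique ((hdφ t).add_const _)
  have hA'per : Function.Periodic (deriv A) (2 * π) := by
    intro t
    have h1 : HasDerivAt (fun s => A (s + 2 * π)) (deriv A (t + 2 * π)) t :=
      (hdA (t + 2 * π)).comp_add_const
    have h2 : (fun s => A (s + 2 * π)) = A := funext hAper
    rw [h2] at h1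
    exact h1.unique (hdA t)
  -- bounds via sup
  have habs : ∀ (g : ℝ → ℝ), Function.Periodic g (2*π) → Continuous g →
      BddAbove (Set.range fun t => |g t|) := by
    intro g hper hcont
    have hper' : Function.Periodic (fun t => |g t|) (2*π) := fun t => by simp [hper t]
    exact (hper'.isBounded_of_continuous (by positivity) hcont.abs).bddAbove
  have ha_le : ∀ t, |deriv A t| ≤ a := fun t => le_ciSup (habs _ hA'per contA') t
  have hb_le : ∀ t, |A t| ≤ b := fun t => le_ciSup (habs _ hAper contA) t
  have ha0 : 0 ≤ a := le_trans (abs_nonneg _) (ha_le 0)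
  have hb0 : 0 ≤ b := le_trans (abs_nonneg _) (hb_le 0)
  -- lower bounds for deriv φ
  have hbddbelow : BddBelow (Set.range (deriv φ)) := by
    by_contra h
    rw [Real.iInf_of_not_bddBelow h] at hinf
    exact lt_irrefl 0 hinf
  have hφ'lb : ∀ t, (⨅ s : ℝ, deriv φ s) ≤ deriv φ t := fun t => ciInf_le hbddbelow t
  have hcpos : 0 < c := by
    have h1 : (⨅ s : ℝ, deriv φ s) ≤ c := by
      apply le_csInf
      · exact ⟨deriv φ π, π, ⟨by constructor <;> nlinarith, rfl⟩⟩
      · rintro x ⟨t, -, rfl⟩; exact hφ'lb t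
    exact lt_of_lt_of_le hinf h1
  have hbddimg : BddBelow (deriv φ '' Set.Ioo 0 (2*π)) :=
    hbddbelow.mono (Set.image_subset_range _ _)
  have hc_le : ∀ t ∈ Set.Icc (0:ℝ) (2*π), c ≤ deriv φ t := by
    have hclosed : IsClosed {t : ℝ | c ≤ deriv φ t} := isClosed_le continuous_const contφ'
    have hIoo : Set.Ioo (0:ℝ) (2*π) ⊆ {t | c ≤ deriv φ t} := fun t ht =>
      csInf_le hbddimg ⟨t, ht, rfl⟩
    intro t ht
    have hsub : Set.Icc (0:ℝ) (2*π) ⊆ {t | c ≤ deriv φ t} := by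
      rw [← closure_Ioo (by nlinarith : (0:ℝ) ≠ 2*π)]
      exact hclosed.closure_subset_iff.mpr hIoo
    exact hsub ht
  -- the two integrals coincide
  have hnormf : ∀ t, ‖f t‖ = A t := by
    intro t
    rw [hf t, norm_mul]
    have h1 : ‖Complex.exp (Complex.I * (φ t : ℂ))‖ = 1 := by
      simp [Complex.norm_exp]
    rw [h1, mul_one, Complex.norm_real, Real.norm_eq_abs, abs_of_pos (hApos t)]
  have hIf : (∫ t in (0:ℝ)..(2*π), ‖f t‖^2) = ∫ t in (0:ℝ)..(2*π), A t ^2 := by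
    apply intervalIntegral.integral_congr; intro t _; simp [hnormf t]
  have hIpos : (0:ℝ) < ∫ t in (0:ℝ)..(2*π), A t^2 := by
    apply intervalIntegral.intervalIntegral_pos_of_pos_on
    · exact (contA.pow 2).intervalIntegrable _ _
    · intro t _; exact pow_pos (hApos t) 2
    · exact h2pi
  ------------------------------------------------------------------
  -- KEY oscillatory integral bound via integration by parts
  ------------------------------------------------------------------
  have key : ∀ M : ℕ, ‖∫ t in (0:ℝ)..(2*π),
      (A t : ℂ) * Complex.exp (Complex.I * ((φ t + (M:ℝ) * t : ℝ) : ℂ))‖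
      ≤ 2*π*((a + ε*b)/(c + (M:ℝ))) := by
    intro M
    set θ' : ℝ → ℝ := fun t => deriv φ t + M with hθ'def
    have hcM : (0:ℝ) < c + M := by positivity
    have hθ'ge : ∀ t ∈ Set.Icc (0:ℝ) (2*π), c + M ≤ θ' t := fun t ht =>
      add_le_add_left (hc_le t ht) _
    set d : ℝ → ℂ := fun t => Complex.I * ((θ' t : ℝ) : ℂ) with hd_def
    have hdne : ∀ t ∈ Set.Icc (0:ℝ) (2*π), d t ≠ 0 := by
      intro t ht
      have : (0:ℝ) < θ' t := lt_of_lt_of_le hcM (hθ'ge t ht)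
      exact mul_ne_zero Complex.I_ne_zero (by exact_mod_cast this.ne')
    set v : ℝ → ℂ := fun t => Complex.exp (Complex.I * ((φ t + (M:ℝ) * t : ℝ) : ℂ)) with hv_def
    set u : ℝ → ℂ := fun t => (A t : ℂ) / d t with hu_def
    set u' : ℝ → ℂ := fun t =>
      (((deriv A t : ℝ) : ℂ) * d t - (A t : ℂ) * (Complex.I * ((deriv (deriv φ) t : ℝ) : ℂ))) / d t ^ 2
      with hu'_def
    have hvd : ∀ t : ℝ, HasDerivAt v (v t * d t) t := by
      intro t
      have h1 : HasDerivAt (fun s => φ s + (M:ℝ)*s) (θ' t) t := by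
        exact ((hdφ t).add ((hasDerivAt_id' (x := t)).const_mul (M:ℝ))).congr_deriv (by simp [hθ'def])
      exact ((h1.ofReal_comp).const_mul Complex.I).cexp
    have hud : ∀ t ∈ Set.Icc (0:ℝ) (2*π), HasDerivAt u (u' t) t := by
      intro t ht
      have hnum : HasDerivAt (fun s : ℝ => ((A s : ℝ) : ℂ)) (((deriv A t : ℝ) : ℂ)) t :=
        (hdA t).ofReal_comp
      have hden : HasDerivAt d (Complex.I * ((deriv (deriv φ) t : ℝ) : ℂ)) t := by
        have h1 : HasDerivAt θ' (deriv (deriv φ) t) t := (hdφ' t).add_const _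
        exact (h1.ofReal_comp).const_mul Complex.I
      exact hnum.div hden (hdne t ht)
    have hcontθ' : Continuous θ' := contφ'.add continuous_const
    have hcontd : Continuous d := continuous_const.mul (Complex.continuous_ofReal.comp hcontθ')
    have hcontv : Continuous v :=
      Complex.continuous_exp.comp (continuous_const.mul (Complex.continuous_ofReal.comp
        (contφ.add (continuous_const.mul continuous_id'))))
    have huIcc : Set.uIcc (0:ℝ) (2*π) = Set.Icc (0:ℝ) (2*π) := Set.uIcc_of_le h2pi.le
    have hu'int : IntervalIntegrable u' volume 0 (2*π) := by
      apply ContinuousOn.intervalIntegrable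
      rw [huIcc]
      apply ContinuousOn.div
      · exact (((Complex.continuous_ofReal.comp contA').mul hcontd).sub
          ((Complex.continuous_ofReal.comp contA).mul (continuous_const.mul
            (Complex.continuous_ofReal.comp contφ'')))).continuousOn
      · exact (hcontd.pow 2).continuousOn
      · intro x hx; exact pow_ne_zero 2 (hdne x hx)
    have hv'int : IntervalIntegrable (fun t => v t * d t) volume 0 (2*π) :=
      (hcontv.mul hcontd).intervalIntegrable _ _
    have hIBP := intervalIntegral.integral_mul_deriv_eq_deriv_mul
      (u := u) (v := v) (u' := u') (v' := fun t => v t * d t)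
      (fun x hx => hud x (by rwa [huIcc] at hx))
      (fun x _ => hvd x) hu'int hv'int
    have hintg : (∫ t in (0:ℝ)..(2*π), (A t : ℂ) *
        Complex.exp (Complex.I * ((φ t + (M:ℝ) * t : ℝ) : ℂ)))
        = ∫ t in (0:ℝ)..(2*π), u t * (v t * d t) := by
      apply intervalIntegral.integral_congr
      intro t ht
      rw [huIcc] at ht
      have hd0 := hdne t ht
      simp only [hu_def, hv_def]
      field_simp
    -- boundary terms cancel
    have hA2 : A (2*π) = A 0 := by simpa using hAper 0
    have hθ2 : θ' (2*π) = θ' 0 := by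
      simp only [hθ'def]
      rw [show (2*π:ℝ) = 0 + 2*π by ring, hφ'per 0]
    have hv2 : v (2*π) = v 0 := by
      simp only [hv_def]
      have hphase : (φ (2*π) + (M:ℝ)*(2*π) : ℝ) = (φ 0 + (M:ℝ)*0) + 2*π*((m:ℝ) + M) := by
        rw [show (2*π:ℝ) = 0 + 2*π by ring, hφper 0]; push_cast; ring
      rw [hphase, Complex.ofReal_add, mul_add, Complex.exp_add]
      have h1 : Complex.I * ((2*π*((m:ℝ) + M) : ℝ) : ℂ) = ((m + M : ℤ) : ℂ) * (2*π*Complex.I) := by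
        push_cast; ring
      rw [h1, Complex.exp_int_mul_two_pi_mul_I, mul_one]
    have hbdry : u (2*π) * v (2*π) - u 0 * v 0 = 0 := by
      simp only [hu_def, hd_def, hA2, hθ2, hv2]
      ring
    rw [hintg, hIBP, hbdry, zero_sub, norm_neg]
    -- bound the remaining integral
    have hbound : ∀ t ∈ Set.uIoc (0:ℝ) (2*π), ‖u' t * v t‖ ≤ (a + ε*b)/(c + M) := by
      intro t ht
      rw [Set.uIoc_of_le h2pi.le] at ht
      have ht' : t ∈ Set.Icc (0:ℝ) (2*π) := ⟨ht.1.le, ht.2⟩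
      have hθt : c + M ≤ θ' t := hθ'ge t ht'
      have hθpos : (0:ℝ) < θ' t := lt_of_lt_of_le hcM hθt
      have hv1 : ‖v t‖ = 1 := by
        simp only [hv_def]
        simp [Complex.norm_exp]
      rw [norm_mul, hv1, mul_one]
      have hnum : ((deriv A t : ℝ) : ℂ) * d t - (A t:ℂ) * (Complex.I * ((deriv (deriv φ) t : ℝ):ℂ))
          = Complex.I * ((deriv A t * θ' t - A t * deriv (deriv φ) t : ℝ) : ℂ) := by
        simp only [hd_def]; push_cast; ring
      have h1 : ‖u' t‖ = |deriv A t * θ' t - A t * deriv (deriv φ) t| / (θ' t)^2 := by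
        simp only [hu'_def]; rw [hnum]; simp only [norm_div, norm_mul, norm_pow, hd_def,
          Complex.norm_I, Complex.norm_real, one_mul, Real.norm_eq_abs]
        rw [abs_of_pos hθpos]
      rw [h1]
      have h2 : |deriv A t * θ' t - A t * deriv (deriv φ) t| ≤ (a + ε*b) * θ' t := by
        have e1 : |deriv A t| * θ' t ≤ a * θ' t :=
          mul_le_mul_of_nonneg_right (ha_le t) hθpos.le
        have e2 : |A t| * |deriv (deriv φ) t| ≤ b * (ε * deriv φ t) :=
          mul_le_mul (hb_le t) (hφ'' t) (abs_nonneg _) hb0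
        have e3 : deriv φ t ≤ θ' t := by
          simp only [hθ'def]
          exact le_add_of_nonneg_right (by positivity)
        have e4 : b * (ε * deriv φ t) ≤ b * (ε * θ' t) :=
          mul_le_mul_of_nonneg_left (mul_le_mul_of_nonneg_left e3 hε.le) hb0
        calc |deriv A t * θ' t - A t * deriv (deriv φ) t|
            ≤ |deriv A t * θ' t| + |A t * deriv (deriv φ) t| := abs_sub _ _
          _ = |deriv A t| * θ' t + |A t| * |deriv (deriv φ) t| := by
              rw [abs_mul, abs_mul, abs_of_pos hθpos]
          _ ≤ a * θ' t + b * (ε * θ' t) := by linarith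
          _ = (a + ε*b) * θ' t := by ring
      calc |deriv A t * θ' t - A t * deriv (deriv φ) t| / (θ' t)^2
          ≤ ((a + ε*b) * θ' t) / (θ' t)^2 := by gcongr
        _ = (a + ε*b) / θ' t := by rw [pow_two, mul_div_mul_right _ _ hθpos.ne']
        _ ≤ (a + ε*b) / (c + M) := by
            apply div_le_div_of_nonneg_left (by positivity) hcM hθt
    calc ‖∫ t in (0:ℝ)..(2*π), u' t * v t‖
        ≤ (a + ε*b)/(c + M) * |2*π - 0| :=
          intervalIntegral.norm_integral_le_of_norm_le_const hbound
      _ = 2*π*((a + ε*b)/(c + (M:ℝ))) := by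
          rw [sub_zero, abs_of_pos h2pi]; ring
  ------------------------------------------------------------------
  -- coefficient bound
  ------------------------------------------------------------------
  have hcoef : ∀ (N : ℕ) (k : ℕ),
      ‖fourierCoef (fun t => Complex.exp (Complex.I * N * t) * f t) (-((k:ℤ)+1))‖
        ≤ (a + ε*b)/(c + ((N + k + 1 : ℕ) : ℝ)) := by
    intro N k
    have hptw : ∀ t : ℝ, (fun t : ℝ => Complex.exp (Complex.I * N * t) * f t) t *
        Complex.exp (-(Complex.I * ((-((k:ℤ)+1) : ℤ) : ℂ) * t))
        = (A t : ℂ) * Complex.exp (Complex.I * ((φ t + ((N+k+1:ℕ):ℝ) * t : ℝ) : ℂ)) := by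
      intro t
      simp only
      rw [hf t]
      rw [show Complex.exp (Complex.I * N * t) * ((A t:ℂ) * Complex.exp (Complex.I * (φ t : ℂ)))
          * Complex.exp (-(Complex.I * ((-((k:ℤ)+1) : ℤ) : ℂ) * t))
          = (A t:ℂ) * (Complex.exp (Complex.I * N * t) * Complex.exp (Complex.I * (φ t : ℂ))
            * Complex.exp (-(Complex.I * ((-((k:ℤ)+1) : ℤ) : ℂ) * t))) from by ring]
      rw [← Complex.exp_add, ← Complex.exp_add]
      congr 1
      push_cast
      ring
    unfold fourierCoef
    rw [intervalIntegral.integral_congr (fun t _ => hptw t), norm_mul]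
    have hnc : ‖(1 / (2 * (π:ℂ)))‖ = 1/(2*π) := by
      rw [show (2*(π:ℂ)) = ((2*π : ℝ):ℂ) by push_cast; ring,
        norm_div, norm_one, Complex.norm_real, Real.norm_eq_abs, abs_of_pos h2pi]
    rw [hnc]
    have hk := key (N + k + 1)
    calc 1/(2*π) * ‖∫ t in (0:ℝ)..(2*π), (A t : ℂ) *
          Complex.exp (Complex.I * ((φ t + ((N+k+1:ℕ):ℝ) * t : ℝ) : ℂ))‖
        ≤ 1/(2*π) * (2*π*((a + ε*b)/(c + ((N+k+1:ℕ):ℝ)))) := by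
          apply mul_le_mul_of_nonneg_left hk (by positivity)
      _ = (a + ε*b)/(c + ((N+k+1:ℕ):ℝ)) := by field_simp
  ------------------------------------------------------------------
  constructor
  · intro N hN
    rw [hIf]
    set x : ℝ := c + N with hx_def
    have hxpos : 0 < x := by positivity
    -- telescoping
    have hden : ∀ k : ℕ, (0:ℝ) < x + k := fun k => by positivity
    have htel : HasSum (fun k : ℕ => (1:ℝ)/(x+k) - 1/(x+(k+1))) (1/x) := by
      have hnn : ∀ k:ℕ, (0:ℝ) ≤ 1/(x+k) - 1/(x+(k+1)) := by
        intro k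
        have h1 : (1:ℝ)/(x+(k+1)) ≤ 1/(x+k) := by
          apply div_le_div_of_nonneg_left one_pos.le (hden k)
          linarith
        linarith
      rw [hasSum_iff_tendsto_nat_of_nonneg hnn]
      have hps : ∀ n:ℕ, ∑ i ∈ Finset.range n, ((1:ℝ)/(x+i) - 1/(x+(i+1))) = 1/x - 1/(x+n) := by
        intro n
        have := Finset.sum_range_sub' (f := fun i : ℕ => (1:ℝ)/(x+(i:ℝ))) n
        simpa using this
      simp only [hps]
      have h0 : Filter.Tendsto (fun n:ℕ => (1:ℝ)/(x+n)) Filter.atTop (nhds 0) := by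
        simp only [one_div]
        exact tendsto_inv_atTop_zero.comp
          (Filter.tendsto_atTop_add_const_left _ x tendsto_natCast_atTop_atTop)
      simpa using (tendsto_const_nhds (x := 1/x)).sub h0
    set C : ℝ := (a + ε*b)^2 with hC_def
    have hC0 : 0 ≤ C := sq_nonneg _
    have hU : HasSum (fun k : ℕ => C * ((1:ℝ)/(x+k) - 1/(x+(k+1)))) (C * (1/x)) :=
      htel.mul_left C
    have hSU : ∀ k : ℕ, ((a + ε*b)/(x+(k+1)))^2 ≤ C * ((1:ℝ)/(x+k) - 1/(x+(k+1))) := by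
      intro k
      have h1 : ((1:ℝ)/(x+(k+1)))^2 ≤ 1/(x+k) - 1/(x+(k+1)) := by
        have hk0 := hden k
        have hk1 : (0:ℝ) < x + ((k:ℝ)+1) := by positivity
        have key2 : (x+(k:ℝ)) * (x+((k:ℝ)+1)) ≤ (x+((k:ℝ)+1))^2 := by nlinarith
        calc ((1:ℝ)/(x+((k:ℝ)+1)))^2 = 1/((x+((k:ℝ)+1))^2) := by rw [div_pow, one_pow]
          _ ≤ 1/((x+(k:ℝ))*(x+((k:ℝ)+1))) :=
              div_le_div_of_nonneg_left one_pos.le (by positivity) key2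
          _ = 1/(x+(k:ℝ)) - 1/(x+((k:ℝ)+1)) := by
              rw [div_sub_div _ _ hk0.ne' hk1.ne']
              congr 1
              ring
      calc ((a + ε*b)/(x+(k+1)))^2 = C * ((1:ℝ)/(x+(k+1)))^2 := by
            rw [hC_def]; rw [div_pow, div_pow, one_pow]; ring
        _ ≤ C * ((1:ℝ)/(x+k) - 1/(x+(k+1))) := mul_le_mul_of_nonneg_left h1 hC0
    have hTle : ∀ k : ℕ,
        ‖fourierCoef (fun t => Complex.exp (Complex.I * N * t) * f t) (-((k:ℤ)+1))‖ ^ 2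
          ≤ C * ((1:ℝ)/(x+k) - 1/(x+(k+1))) := by
      intro k
      refine le_trans ?_ (hSU k)
      have h1 := hcoef N k
      have h2 : (c + ((N + k + 1 : ℕ) : ℝ)) = x + (k+1) := by
        rw [hx_def]; push_cast; ring
      rw [h2] at h1
      have h3 : (0:ℝ) ≤ (a + ε*b)/(x+(k+1)) := by positivity
      calc ‖fourierCoef (fun t => Complex.exp (Complex.I * N * t) * f t) (-((k:ℤ)+1))‖ ^ 2
          ≤ ((a + ε*b)/(x+(k+1)))^2 := by
            apply pow_le_pow_left₀ (norm_nonneg _) h1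
        _ = ((a + ε*b)/(x+(k+1)))^2 := rfl
    have hsumT : Summable (fun k : ℕ =>
        ‖fourierCoef (fun t => Complex.exp (Complex.I * N * t) * f t) (-((k:ℤ)+1))‖ ^ 2) :=
      Summable.of_nonneg_of_le (fun k => by positivity) hTle hU.summable
    have htsum : (∑' k : ℕ,
        ‖fourierCoef (fun t => Complex.exp (Complex.I * N * t) * f t) (-((k:ℤ)+1))‖ ^ 2)
          ≤ C * (1/x) := by
      rw [← hU.tsum_eq]
      exact Summable.tsum_le_tsum hTle hsumT hU.summable
    -- final arithmetic
    have hfinal : 2*π*(C * (1/x)) ≤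
        8*π^2/(∫ t in (0:ℝ)..(2*π), A t^2) * (a^2 + ε^2*b^2) / x * ∫ t in (0:ℝ)..(2*π), A t^2 := by
      have hI := hIpos
      have hrhs : 8*π^2/(∫ t in (0:ℝ)..(2*π), A t^2) * (a^2 + ε^2*b^2) / x
          * (∫ t in (0:ℝ)..(2*π), A t^2) = (8*π^2*(a^2 + ε^2*b^2))/x := by
        field_simp
        rw [mul_comm π 2]; field_simp
      rw [hrhs, mul_one_div, ← mul_div_assoc]
      apply (div_le_div_iff_of_pos_right hxpos).mpr
      rw [hC_def]
      have hs : (a+ε*b)^2 ≤ 2*(a^2 + ε^2*b^2) := by nlinarith [sq_nonneg (a - ε*b)]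
      have h4 : (4*π) ≤ 8*π^2 := by nlinarith [Real.pi_gt_three]
      have hnn : (0:ℝ) ≤ a^2 + ε^2*b^2 := by positivity
      nlinarith [mul_le_mul_of_nonneg_left hs (le_of_lt (by positivity : (0:ℝ) < 2*π)),
        mul_le_mul_of_nonneg_right h4 hnn]
    calc 2 * π * ∑' k : ℕ,
        ‖fourierCoef (fun t => Complex.exp (Complex.I * N * t) * f t) (-((k:ℤ)+1))‖ ^ 2
        ≤ 2*π*(C * (1/x)) := mul_le_mul_of_nonneg_left htsum (by positivity)
      _ ≤ _ := hfinal
  · have h1 : Filter.Tendsto (fun N:ℕ => (c + (N:ℝ))) Filter.atTop Filter.atTop :=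
      Filter.tendsto_atTop_add_const_left _ c tendsto_natCast_atTop_atTop
    have h2 := h1.inv_tendsto_atTop
    have h3 := (h2.const_mul (8*π^2/(∫ t in (0:ℝ)..(2*π), A t^2) * (a^2 + ε^2*b^2))).mul_const
      (∫ t in (0:ℝ)..(2*π), ‖f t‖^2)
    simpa [div_eq_mul_inv, mul_assoc] using h3
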